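/- Let D = {(p_t, x_t) : t = 1,…,T} be a dataset with p_t ∈ ℝ^m having strictly positive entries and x_t ∈ ℝ^m. If D satisfies the Generalized Axiom of Revealed Preference (GARP) — for every finite sequence of indices t_1,…,t_k from {1,…,T} such that p_{t_j}ᵀ x_{t_j} ≥ p_{t_j}ᵀ x_{t_{j+1}} for all j = 1,…,k−1, it holds that p_{t_k}ᵀ x_{t_k} ≤ p_{t_k}ᵀ x_{t_1} — then there exist scalars u_t and λ_t > 0, t = 1,…,T, satisfying the Afriat inequalities u_τ − u_t − λ_t p_tᵀ (x_τ − x_t) ≤ 0 for all t, τ ∈ {1,…,T}. Consequently D is rationalized by a continuous, concave, strictly increasing utility function. -/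

import Mathlib

open Finset

/-- The Generalized Axiom of Revealed Preference (GARP) for the dataset
`D = {(p_t, x_t)}`: for every finite sequence of indices `t_1, …, t_k` with
`p_{t_j}ᵀ x_{t_j} ≥ p_{t_j}ᵀ x_{t_{j+1}}` for all `j = 1, …, k−1`, it holds that
`p_{t_k}ᵀ x_{t_k} ≤ p_{t_k}ᵀ x_{t_1}`. -/
def GARP (m T : ℕ) (p x : Fin T → Fin m → ℝ) : Prop :=
  ∀ (k : ℕ) (ts : Fin (k + 1) → Fin T),
    (∀ j : Fin k,
      ∑ i, p (ts j.castSucc) i * x (ts j.succ) i ≤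
        ∑ i, p (ts j.castSucc) i * x (ts j.castSucc) i) →
    ∑ i, p (ts (Fin.last k)) i * x (ts (Fin.last k)) i ≤
      ∑ i, p (ts (Fin.last k)) i * x (ts 0) i

/-- A reflexive-transitive chain can be realized as a nonempty list forming a `Chain'`. -/
lemma rtg_list {α : Type*} {r : α → α → Prop} {t s : α} (h : Relation.ReflTransGen r t s) :
    ∃ l : List α, ∃ hne : l ≠ [], List.Chain' r l ∧ l.head hne = t ∧ l.getLast hne = s := by
  induction h with
  | refl => exact ⟨[t], by simp, List.isChain_singleton t, rfl, rfl⟩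
  | @tail b c _ hbc ih =>
    obtain ⟨l, hne, hc, hh, hl⟩ := ih
    refine ⟨l ++ [c], by simp, ?_, ?_, ?_⟩
    · refine hc.append (List.isChain_singleton _) ?_
      intro a ha b' hb
      simp [List.getLast?_eq_getLast hne, hl] at ha
      simp at hb
      subst ha hb; exact hbc
    · rw [List.head_append_of_ne_nil hne]; exact hh
    · simp [List.getLast_append]

/-- GARP applied along a list-chain of revealed preferences. -/
lemma garp_list {m T : ℕ} {p x : Fin T → Fin m → ℝ} (hg : GARP m T p x)
    (l : List (Fin T)) (hne : l ≠ [])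
    (hc : List.Chain' (fun t s => ∑ i, p t i * x s i ≤ ∑ i, p t i * x t i) l) :
    ∑ i, p (l.getLast hne) i * x (l.getLast hne) i ≤
      ∑ i, p (l.getLast hne) i * x (l.head hne) i := by
  obtain ⟨k, hk⟩ : ∃ k, l.length = k + 1 :=
    ⟨l.length - 1, (Nat.succ_pred_eq_of_pos (List.length_pos_iff.mpr hne)).symm⟩
  set ts : Fin (k+1) → Fin T := fun j => l.get (Fin.cast hk.symm j) with hts
  have h0 : ts 0 = l.head hne := by
    show l.get _ = _
    have : Fin.cast hk.symm (0 : Fin (k+1)) = ⟨0, by omega⟩ := rfl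
    rw [this, List.get_mk_zero]
  have hlast : ts (Fin.last k) = l.getLast hne := by
    show l.get _ = _
    simp [List.getLast_eq_getElem, hk]
  have hmain := hg k ts ?_
  · rwa [h0, hlast] at hmain
  · intro j
    have hlt : j.val < l.length - 1 := by omega
    have := List.isChain_iff_getElem.mp hc j.val (by omega)
    convert this using 3 <;> rfl

/-- Fostel–Scarf–Todd style induction: cyclical consistency of the cross-cost
matrix `A` yields a solution of the Afriat inequalities on any finite index set. -/
lemma afriat_matrix {n : ℕ} (A : Fin n → Fin n → ℝ)
    (hcyc : ∀ t s : Fin n, Relation.ReflTransGen (fun u v => A u v ≤ 0) s t → 0 ≤ A t s)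
    (S : Finset (Fin n)) :
    ∃ u lam : Fin n → ℝ, (∀ t ∈ S, 0 < lam t) ∧
      ∀ t ∈ S, ∀ τ ∈ S, u τ ≤ u t + lam t * A t τ := by
  classical
  induction S using Finset.strongInduction with
  | _ S ih =>
  rcases S.eq_empty_or_nonempty with hS | hS
  · exact ⟨0, fun _ => 1, by simp [hS], by simp [hS]⟩
  set r : Fin n → Fin n → Prop := fun u v => A u v ≤ 0 with hr
  set RS : Fin n → Finset (Fin n) :=
    fun t => S.filter (fun s => Relation.ReflTransGen r t s) with hRSdef
  obtain ⟨t0, ht0S, ht0min⟩ := S.exists_min_image (fun t => (RS t).card) hS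
  set I := RS t0 with hI
  have hIS : I ⊆ S := filter_subset _ _
  have ht0I : t0 ∈ I := mem_filter.mpr ⟨ht0S, Relation.ReflTransGen.refl⟩
  have hclose : ∀ t ∈ I, ∀ s ∈ S, A t s ≤ 0 → s ∈ I := by
    intro t ht s hs hle
    exact mem_filter.mpr ⟨hs, (mem_filter.mp ht).2.tail hle⟩
  have hRSeq : ∀ s ∈ I, RS s = I := by
    intro s hs
    have hsub : RS s ⊆ I := by
      intro v hv
      obtain ⟨hvS, hreach⟩ := mem_filter.mp hv
      exact mem_filter.mpr ⟨hvS, ((mem_filter.mp hs).2).trans hreach⟩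
    exact Finset.eq_of_subset_of_card_le hsub (ht0min s (hIS hs))
  have hInn : ∀ t ∈ I, ∀ s ∈ I, 0 ≤ A t s := by
    intro t ht s hs
    have htm : t ∈ RS s := (hRSeq s hs) ▸ ht
    exact hcyc t s (mem_filter.mp htm).2
  set J := S \ I with hJdef
  have hJss : J ⊂ S := Finset.sdiff_ssubset hIS ⟨t0, ht0I⟩
  obtain ⟨u0, lam0, hlam0, hafr0⟩ := ih J hJss
  have hposJ : ∀ t ∈ I, ∀ s ∈ J, 0 < A t s := by
    intro t ht s hs
    rcases Finset.mem_sdiff.mp hs with ⟨hsS, hsI⟩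
    by_contra h
    push_neg at h
    exact hsI (hclose t ht s hsS h)
  set ustar : ℝ := -∑ q ∈ J ×ˢ I, max 0 (-(u0 q.1 + lam0 q.1 * A q.1 q.2)) with hustardef
  have hustar : ∀ t ∈ J, ∀ τ ∈ I, ustar ≤ u0 t + lam0 t * A t τ := by
    intro t ht τ hτ
    have hmem : (t, τ) ∈ J ×ˢ I := mem_product.mpr ⟨ht, hτ⟩
    have h1 : max 0 (-(u0 t + lam0 t * A t τ)) ≤
        ∑ q ∈ J ×ˢ I, max 0 (-(u0 q.1 + lam0 q.1 * A q.1 q.2)) :=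
      Finset.single_le_sum (f := fun q => max 0 (-(u0 q.1 + lam0 q.1 * A q.1 q.2)))
        (fun q _ => le_max_left _ _) hmem
    have h2 : -(u0 t + lam0 t * A t τ) ≤ max 0 (-(u0 t + lam0 t * A t τ)) := le_max_right _ _
    rw [hustardef]
    linarith
  set lam : Fin n → ℝ :=
    fun t => if t ∈ I then 1 + ∑ τ ∈ J, max 0 ((u0 τ - ustar) / A t τ) else lam0 t with hlamdef
  set u : Fin n → ℝ := fun t => if t ∈ I then ustar else u0 t with hudef
  have hlampos : ∀ t ∈ I, 0 < lam t := by
    intro t ht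
    have hnn : (0:ℝ) ≤ ∑ τ ∈ J, max 0 ((u0 τ - ustar) / A t τ) :=
      Finset.sum_nonneg fun τ _ => le_max_left _ _
    simp only [hlamdef, if_pos ht]
    linarith
  refine ⟨u, lam, ?_, ?_⟩
  · intro t htS
    by_cases htI : t ∈ I
    · exact hlampos t htI
    · simp only [hlamdef, if_neg htI]
      exact hlam0 t (Finset.mem_sdiff.mpr ⟨htS, htI⟩)
  · intro t htS τ hτS
    by_cases htI : t ∈ I <;> by_cases hτI : τ ∈ I
    · simp only [hudef, hlamdef, if_pos htI, if_pos hτI]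
      have h1 := hInn t htI τ hτI
      have h2 := hlampos t htI
      simp only [hlamdef, if_pos htI] at h2
      nlinarith
    · have hτJ : τ ∈ J := Finset.mem_sdiff.mpr ⟨hτS, hτI⟩
      simp only [hudef, hlamdef, if_pos htI, if_neg hτI]
      have ha : 0 < A t τ := hposJ t htI τ hτJ
      have hterm : (u0 τ - ustar) / A t τ ≤ ∑ τ' ∈ J, max 0 ((u0 τ' - ustar) / A t τ') := by
        calc (u0 τ - ustar) / A t τ ≤ max 0 ((u0 τ - ustar) / A t τ) := le_max_right _ _
        _ ≤ _ := Finset.single_le_sum (f := fun τ' => max 0 ((u0 τ' - ustar) / A t τ'))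
          (fun q _ => le_max_left _ _) hτJ
      have hmul : (u0 τ - ustar) / A t τ * A t τ = u0 τ - ustar := div_mul_cancel₀ _ ha.ne'
      nlinarith
    · have htJ : t ∈ J := Finset.mem_sdiff.mpr ⟨htS, htI⟩
      simp only [hudef, hlamdef, if_neg htI, if_pos hτI]
      exact hustar t htJ τ hτI
    · have htJ : t ∈ J := Finset.mem_sdiff.mpr ⟨htS, htI⟩
      have hτJ : τ ∈ J := Finset.mem_sdiff.mpr ⟨hτS, hτI⟩
      simp only [hudef, hlamdef, if_neg htI, if_neg hτI]
      exact hafr0 t htJ τ hτJ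

/-- A finite infimum of continuous real functions is continuous. -/
lemma continuous_finset_inf' {ι E : Type*} [TopologicalSpace E] {s : Finset ι}
    (hs : s.Nonempty) {f : ι → E → ℝ} (hf : ∀ i, Continuous (f i)) :
    Continuous fun z => s.inf' hs fun i => f i z := by
  induction hs using Finset.Nonempty.cons_induction with
  | singleton a => simpa using hf a
  | cons a s h hs ih =>
    rw [show (fun z => (Finset.cons a s h).inf' (Finset.cons_nonempty h) fun i => f i z)
        = fun z => (f a z) ⊓ (s.inf' hs fun i => f i z) from
      funext fun z => Finset.inf'_cons hs _]
    exact (hf a).min ih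

/-- A finite infimum of concave real functions is concave. -/
lemma concaveOn_finset_inf' {ι E : Type*} [AddCommGroup E] [Module ℝ E] {s : Finset ι}
    (hs : s.Nonempty) {f : ι → E → ℝ} (hf : ∀ i, ConcaveOn ℝ Set.univ (f i)) :
    ConcaveOn ℝ Set.univ fun z => s.inf' hs fun i => f i z := by
  induction hs using Finset.Nonempty.cons_induction with
  | singleton a => simpa using hf a
  | cons a s h hs ih =>
    rw [show (fun z => (Finset.cons a s h).inf' (Finset.cons_nonempty h) fun i => f i z)
        = fun z => (f a z) ⊓ (s.inf' hs fun i => f i z) from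
      funext fun z => Finset.inf'_cons hs _]
    exact (hf a).inf ih

/-- Affine functions of the given shape are concave. -/
lemma concave_affine {m : ℕ} (w : Fin m → ℝ) (c d e : ℝ) :
    ConcaveOn ℝ Set.univ (fun z : Fin m → ℝ => c + d * ((∑ i, w i * z i) - e)) := by
  refine ⟨convex_univ, ?_⟩
  intro z _ z' _ a b ha hb hab
  have hsum : ∑ i, w i * (a • z + b • z') i
      = a * ∑ i, w i * z i + b * ∑ i, w i * z' i := by
    rw [Finset.mul_sum, Finset.mul_sum, ← Finset.sum_add_distrib]
    refine Finset.sum_congr rfl fun i _ => ?_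
    simp only [Pi.add_apply, Pi.smul_apply, smul_eq_mul]
    ring
  have hb' : b = 1 - a := by linarith
  have key : c + d * ((∑ i, w i * (a • z + b • z') i) - e)
      = a * (c + d * ((∑ i, w i * z i) - e)) + b * (c + d * ((∑ i, w i * z' i) - e)) := by
    rw [hsum, hb']
    ring
  simp only [smul_eq_mul]
  rw [key]

/-- Afriat's Theorem, implication (4) ⟹ (2): if the dataset satisfies GARP, then
the Afriat inequalities have a feasible solution with `λ_t > 0`; consequently the
dataset is rationalized by a continuous, concave, strictly increasing utility. -/
theorem GARP_implies_afriat_inequalities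
    (m T : ℕ)
    (p : Fin T → Fin m → ℝ) (hp : ∀ t i, 0 < p t i)
    (x : Fin T → Fin m → ℝ)
    (hgarp : GARP m T p x) :
    (∃ (u : Fin T → ℝ) (lam : Fin T → ℝ),
      (∀ t, 0 < lam t) ∧
      (∀ t τ, u τ - u t - lam t * ∑ i, p t i * (x τ i - x t i) ≤ 0)) ∧
    (∃ U : (Fin m → ℝ) → ℝ,
      Continuous U ∧
      ConcaveOn ℝ Set.univ U ∧
      (∀ z z' : Fin m → ℝ, (∀ i, z i ≤ z' i) → z ≠ z' → U z < U z') ∧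
      (∀ t, ∀ z : Fin m → ℝ,
        (∑ i, p t i * z i) ≤ (∑ i, p t i * x t i) → U z ≤ U (x t))) := by
  classical
  set A : Fin T → Fin T → ℝ :=
    fun t s => (∑ i, p t i * x s i) - ∑ i, p t i * x t i with hA
  have hcyc : ∀ t s : Fin T, Relation.ReflTransGen (fun u v => A u v ≤ 0) s t → 0 ≤ A t s := by
    intro t s h
    obtain ⟨l, hne, hc, hh, hl⟩ := rtg_list h
    have hc' : List.Chain' (fun t' s' => ∑ i, p t' i * x s' i ≤ ∑ i, p t' i * x t' i) l :=
      hc.imp fun a b hab => sub_nonpos.mp hab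
    have hgl := garp_list hgarp l hne hc'
    rw [hh, hl] at hgl
    simpa [hA, sub_nonneg] using hgl
  obtain ⟨u, lam, hlam, hafr⟩ := afriat_matrix A hcyc Finset.univ
  have hlam' : ∀ t, 0 < lam t := fun t => hlam t (mem_univ t)
  have hafr' : ∀ t τ, u τ ≤ u t + lam t * A t τ := fun t τ => hafr t (mem_univ t) τ (mem_univ τ)
  have hAsum : ∀ t τ, (∑ i, p t i * (x τ i - x t i)) = A t τ := by
    intro t τ
    simp [hA, mul_sub, Finset.sum_sub_distrib]
  constructor
  · exact ⟨u, lam, hlam', fun t τ => by rw [hAsum]; linarith [hafr' t τ]⟩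
  · rcases Nat.eq_zero_or_pos T with hT | hT
    · subst hT
      refine ⟨fun z => ∑ i, z i, ?_, ?_, ?_, fun t => t.elim0⟩
      · exact continuous_finset_sum _ fun i _ => continuous_apply i
      · have h := concave_affine (m := m) (fun _ => 1) 0 1 0
        simpa using h
      · intro z z' hle hnz
        obtain ⟨i0, hi0⟩ := Function.ne_iff.mp hnz
        exact Finset.sum_lt_sum (fun i _ => hle i)
          ⟨i0, Finset.mem_univ _, lt_of_le_of_ne (hle i0) hi0⟩
    · have hne' : Nonempty (Fin T) := Fin.pos_iff_nonempty.mp hT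
      have hne : (Finset.univ : Finset (Fin T)).Nonempty := Finset.univ_nonempty
      set f : Fin T → (Fin m → ℝ) → ℝ :=
        fun t z => u t + lam t * ((∑ i, p t i * z i) - ∑ i, p t i * x t i) with hf
      refine ⟨fun z => Finset.univ.inf' hne fun t => f t z, ?_, ?_, ?_, ?_⟩
      · refine continuous_finset_inf' hne fun t => ?_
        have hcont : Continuous fun z : Fin m → ℝ => ∑ i, p t i * z i :=
          continuous_finset_sum _ fun i _ => continuous_const.mul (continuous_apply i)
        exact continuous_const.add (continuous_const.mul (hcont.sub continuous_const))
      · exact concaveOn_finset_inf' hne fun t => concave_affine (p t) (u t) (lam t) _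
      · intro z z' hle hnz
        obtain ⟨i0, hi0⟩ := Function.ne_iff.mp hnz
        have hstrict : ∀ t, f t z < f t z' := by
          intro t
          have hsum : (∑ i, p t i * z i) < ∑ i, p t i * z' i :=
            Finset.sum_lt_sum (fun i _ => mul_le_mul_of_nonneg_left (hle i) (hp t i).le)
              ⟨i0, Finset.mem_univ _,
                mul_lt_mul_of_pos_left (lt_of_le_of_ne (hle i0) hi0) (hp t i0)⟩
          have hl := hlam' t
          simp only [hf]
          nlinarith
        obtain ⟨t1, _, ht1⟩ := Finset.exists_mem_eq_inf' hne (fun t => f t z')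
        calc Finset.univ.inf' hne (fun t => f t z) ≤ f t1 z :=
              Finset.inf'_le _ (Finset.mem_univ _)
          _ < f t1 z' := hstrict t1
          _ = _ := ht1.symm
      · intro t z hz
        have h1 : Finset.univ.inf' hne (fun s => f s z) ≤ f t z :=
          Finset.inf'_le _ (Finset.mem_univ _)
        have h2 : f t z ≤ u t := by
          simp only [hf]
          nlinarith [hlam' t, sub_nonpos.mpr hz]
        have h3 : u t ≤ Finset.univ.inf' hne (fun s => f s (x t)) := by
          refine Finset.le_inf' _ _ fun s _ => ?_
          have hA' := hafr' s t
          simp only [hf, hA] at hA' ⊢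
          linarith
        linarith
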